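/- Let Ŝ be the four-qubit Smolin operator on H = EuclideanSpace ℂ ((j : Fin 4) → Fin 2), i.e., Ŝ = (1/16)(id + X⊗X⊗X⊗X + Y⊗Y⊗Y⊗Y + Z⊗Z⊗Z⊗Z), where X, Y, Z are the Pauli matrices acting on each qubit factor. Then for every family of unit vectors a₀, a₁, a₂, a₃ ∈ EuclideanSpace ℂ (Fin 2), the expectation value of Ŝ at the product vector P(a) satisfies ⟨P(a), Ŝ P(a)⟩ ≤ 1/8, and this bound is attained (e.g., for a₀ = a₁ = a₂ = a₃ = e₀); hence the maximal separability eigenvalue of Ŝ for the fully separable partition is g_max(Ŝ) = 1/8. -/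

import Mathlib

open scoped ComplexInnerProductSpace

/-- The product vector `P(a)` of a family of vectors, `P(a) i = ∏ j, a j (i j)`. -/
noncomputable def prodVec {N : ℕ} {d : Fin N → ℕ}
    (a : (j : Fin N) → EuclideanSpace ℂ (Fin (d j))) :
    EuclideanSpace ℂ ((j : Fin N) → Fin (d j)) :=
  WithLp.toLp 2 (fun i => ∏ j, a j (i j))

/-- The fourfold tensor power `M⊗M⊗M⊗M` of a `2×2` matrix acting on the four-qubit
space, `(M⊗⁴ v) i = Σ_{i'} (∏ j, M (i j) (i' j)) v i'`. -/
noncomputable def tensorPow4 (M : Matrix (Fin 2) (Fin 2) ℂ)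
    (v : EuclideanSpace ℂ ((j : Fin 4) → Fin 2)) :
    EuclideanSpace ℂ ((j : Fin 4) → Fin 2) :=
  WithLp.toLp 2 (fun i => ∑ i' : (j : Fin 4) → Fin 2, (∏ j, M (i j) (i' j)) * v i')

/-- The Pauli matrix `X`. -/
noncomputable def pauliX : Matrix (Fin 2) (Fin 2) ℂ := !![0, 1; 1, 0]

/-- The Pauli matrix `Y`. -/
noncomputable def pauliY : Matrix (Fin 2) (Fin 2) ℂ := !![0, -Complex.I; Complex.I, 0]

/-- The Pauli matrix `Z`. -/
noncomputable def pauliZ : Matrix (Fin 2) (Fin 2) ℂ := !![1, 0; 0, -1]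

/-- The four-qubit Smolin operator
`Ŝ = (1/16)(id + X⊗X⊗X⊗X + Y⊗Y⊗Y⊗Y + Z⊗Z⊗Z⊗Z)`. -/
noncomputable def smolin (v : EuclideanSpace ℂ ((j : Fin 4) → Fin 2)) :
    EuclideanSpace ℂ ((j : Fin 4) → Fin 2) :=
  (16 : ℂ)⁻¹ • (v + tensorPow4 pauliX v + tensorPow4 pauliY v + tensorPow4 pauliZ v)

/- ### Auxiliary material -/

local notation "conj'" => starRingEnd ℂ

/-- Matrix-vector multiplication on `EuclideanSpace ℂ (Fin 2)`. -/
noncomputable def mulVecE (M : Matrix (Fin 2) (Fin 2) ℂ) (u : EuclideanSpace ℂ (Fin 2)) :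
    EuclideanSpace ℂ (Fin 2) := WithLp.toLp 2 (fun k => ∑ k', M k k' * u k')

lemma tensorPow4_prodVec (M : Matrix (Fin 2) (Fin 2) ℂ)
    (a : (j : Fin 4) → EuclideanSpace ℂ (Fin 2)) :
    tensorPow4 M (prodVec a) = prodVec (fun j => mulVecE M (a j)) := by
  ext i
  simp only [tensorPow4, prodVec, mulVecE, PiLp.toLp_apply]
  rw [Fintype.prod_sum]
  congr 1; funext i'; rw [Finset.prod_mul_distrib]

lemma inner_prodVec {N : ℕ} {d : Fin N → ℕ}
    (a b : (j : Fin N) → EuclideanSpace ℂ (Fin (d j))) :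
    ⟪prodVec a, prodVec b⟫ = ∏ j, ⟪a j, b j⟫ := by
  simp only [PiLp.inner_apply, RCLike.inner_apply, prodVec, map_prod, PiLp.toLp_apply]
  rw [Fintype.prod_sum]
  congr 1; funext i; rw [Finset.prod_mul_distrib]

lemma xC_eq (u : EuclideanSpace ℂ (Fin 2)) :
    ⟪u, mulVecE pauliX u⟫ = ((2 * (conj' (u 0) * u 1).re : ℝ) : ℂ) := by
  simp only [PiLp.inner_apply, RCLike.inner_apply, mulVecE, pauliX, PiLp.toLp_apply, Fin.sum_univ_two,
    Matrix.of_apply, Matrix.cons_val', Matrix.cons_val_zero, Matrix.cons_val_one,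
    Matrix.head_cons, Matrix.empty_val', Matrix.cons_val_fin_one, Matrix.head_fin_const]
  rw [← Complex.add_conj]
  simp only [map_mul, Complex.conj_conj]
  ring

lemma yC_eq (u : EuclideanSpace ℂ (Fin 2)) :
    ⟪u, mulVecE pauliY u⟫ = ((2 * (conj' (u 0) * u 1).im : ℝ) : ℂ) := by
  simp only [PiLp.inner_apply, RCLike.inner_apply, mulVecE, pauliY, PiLp.toLp_apply, Fin.sum_univ_two,
    Matrix.of_apply, Matrix.cons_val', Matrix.cons_val_zero, Matrix.cons_val_one,
    Matrix.head_cons, Matrix.empty_val', Matrix.cons_val_fin_one, Matrix.head_fin_const]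
  have h := Complex.sub_conj (conj' (u 0) * u 1)
  simp only [map_mul, Complex.conj_conj] at h
  have h2 : conj' (u 0) * u 1 - conj' (u 1) * u 0 =
      ((2 * (conj' (u 0) * u 1).im : ℝ) : ℂ) * Complex.I := by
    rw [← h]; ring
  have h3 : (0 * u 0 + -Complex.I * u 1) * conj' (u 0) + (Complex.I * u 0 + 0 * u 1) * conj' (u 1)
      = -Complex.I * (conj' (u 0) * u 1 - conj' (u 1) * u 0) := by ring
  rw [h3, h2]
  rw [show -Complex.I * (((2 * (conj' (u 0) * u 1).im : ℝ) : ℂ) * Complex.I)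
      = -(Complex.I * Complex.I) * ((2 * (conj' (u 0) * u 1).im : ℝ) : ℂ) from by ring,
    Complex.I_mul_I]
  ring

lemma zC_eq (u : EuclideanSpace ℂ (Fin 2)) :
    ⟪u, mulVecE pauliZ u⟫ = ((Complex.normSq (u 0) - Complex.normSq (u 1) : ℝ) : ℂ) := by
  simp only [PiLp.inner_apply, RCLike.inner_apply, mulVecE, pauliZ, PiLp.toLp_apply, Fin.sum_univ_two,
    Matrix.of_apply, Matrix.cons_val', Matrix.cons_val_zero, Matrix.cons_val_one,
    Matrix.head_cons, Matrix.empty_val', Matrix.cons_val_fin_one, Matrix.head_fin_const]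
  rw [show (1 * u 0 + 0 * u 1) * conj' (u 0) + (0 * u 0 + -1 * u 1) * conj' (u 1)
    = conj' (u 0) * u 0 - conj' (u 1) * u 1 from by ring,
    ← Complex.normSq_eq_conj_mul_self, ← Complex.normSq_eq_conj_mul_self]
  push_cast; ring

lemma normsq_sum (u : EuclideanSpace ℂ (Fin 2)) (hu : ‖u‖ = 1) :
    Complex.normSq (u 0) + Complex.normSq (u 1) = 1 := by
  have h : ⟪u, u⟫ = ((1 : ℝ) : ℂ) := by
    rw [inner_self_eq_norm_sq_to_K, hu]; norm_num
  simp only [PiLp.inner_apply, RCLike.inner_apply, Fin.sum_univ_two,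
    ← Complex.normSq_eq_conj_mul_self] at h
  have := congrArg Complex.re h
  push_cast at this
  simpa [Complex.normSq_apply] using this

lemma bloch_sq (u : EuclideanSpace ℂ (Fin 2)) (hu : ‖u‖ = 1) :
    (2 * (conj' (u 0) * u 1).re) ^ 2 + (2 * (conj' (u 0) * u 1).im : ℝ) ^ 2
      + (Complex.normSq (u 0) - Complex.normSq (u 1)) ^ 2 = 1 := by
  have h := normsq_sum u hu
  have hw : (conj' (u 0) * u 1).re ^ 2 + (conj' (u 0) * u 1).im ^ 2
      = Complex.normSq (u 0) * Complex.normSq (u 1) := by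
    have := Complex.normSq_mul (conj' (u 0)) (u 1)
    rw [Complex.normSq_conj] at this
    rw [← this]
    simp [Complex.normSq_apply]; ring
  nlinarith [hw, h]

lemma pairBound (x1 y1 z1 x2 y2 z2 : ℝ) (h1 : x1^2+y1^2+z1^2 = 1) (h2 : x2^2+y2^2+z2^2 = 1) :
    x1^2*x2^2 + y1^2*y2^2 + z1^2*z2^2 ≤ 1 := by
  nlinarith [sq_nonneg (x1*y2), sq_nonneg (x1*z2), sq_nonneg (y1*x2), sq_nonneg (y1*z2),
    sq_nonneg (z1*x2), sq_nonneg (z1*y2)]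

lemma keyIneq (x y z : Fin 4 → ℝ) (h : ∀ j, (x j)^2 + (y j)^2 + (z j)^2 = 1) :
    (∏ j, x j) + (∏ j, y j) + (∏ j, z j) ≤ 1 := by
  rw [Fin.prod_univ_four, Fin.prod_univ_four, Fin.prod_univ_four]
  have p1 := pairBound (x 0) (y 0) (z 0) (x 1) (y 1) (z 1) (h 0) (h 1)
  have p2 := pairBound (x 2) (y 2) (z 2) (x 3) (y 3) (z 3) (h 2) (h 3)
  nlinarith [sq_nonneg (x 0 * x 1 - x 2 * x 3), sq_nonneg (y 0 * y 1 - y 2 * y 3),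
    sq_nonneg (z 0 * z 1 - z 2 * z 3)]

/-- The expectation value of the Smolin operator at a product of unit vectors. -/
lemma expect_eq (a : (j : Fin 4) → EuclideanSpace ℂ (Fin 2)) (ha : ∀ j, ‖a j‖ = 1) :
    (⟪prodVec a, smolin (prodVec a)⟫).re
      = 16⁻¹ * (1 + (∏ j, 2 * (conj' (a j 0) * a j 1).re)
        + (∏ j, 2 * (conj' (a j 0) * a j 1).im)
        + (∏ j, (Complex.normSq (a j 0) - Complex.normSq (a j 1)))) := by
  have h1 : ⟪prodVec a, smolin (prodVec a)⟫
      = (16 : ℂ)⁻¹ * ((∏ j, ⟪a j, a j⟫)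
        + (∏ j, ⟪a j, mulVecE pauliX (a j)⟫)
        + (∏ j, ⟪a j, mulVecE pauliY (a j)⟫)
        + (∏ j, ⟪a j, mulVecE pauliZ (a j)⟫)) := by
    simp only [smolin, inner_smul_right, inner_add_right, tensorPow4_prodVec, inner_prodVec]
  have hself : (∏ j, (⟪a j, a j⟫ : ℂ)) = ((1 : ℝ) : ℂ) := by
    rw [Finset.prod_congr rfl (fun j _ => by
      rw [inner_self_eq_norm_sq_to_K, ha j]; norm_num : ∀ j ∈ Finset.univ, (⟪a j, a j⟫ : ℂ) = 1)]
    norm_num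
  rw [h1, hself]
  rw [Finset.prod_congr rfl (fun j _ => xC_eq (a j)),
    Finset.prod_congr rfl (fun j _ => yC_eq (a j)),
    Finset.prod_congr rfl (fun j _ => zC_eq (a j)),
    ← Complex.ofReal_prod, ← Complex.ofReal_prod, ← Complex.ofReal_prod,
    show (16 : ℂ)⁻¹ = ((16⁻¹ : ℝ) : ℂ) from by norm_num,
    ← Complex.ofReal_add, ← Complex.ofReal_add, ← Complex.ofReal_add, ← Complex.ofReal_mul,
    Complex.ofReal_re]

/-- **Maximal separability eigenvalue of the Smolin state for the fully separable
partition.**  For every family of unit vectors `a₀, a₁, a₂, a₃` the expectation value of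
the Smolin operator at the product vector `P(a)` is at most `1/8`; the bound is attained
at `a₀ = a₁ = a₂ = a₃ = e₀`; hence `g_max(Ŝ) = 1/8`. -/
theorem smolin_gmax :
    (∀ a : (j : Fin 4) → EuclideanSpace ℂ (Fin 2), (∀ j, ‖a j‖ = 1) →
      (⟪prodVec a, smolin (prodVec a)⟫).re ≤ 1 / 8) ∧
    (⟪prodVec (fun _ : Fin 4 => EuclideanSpace.single (0 : Fin 2) (1 : ℂ)),
        smolin (prodVec (fun _ : Fin 4 => EuclideanSpace.single (0 : Fin 2) (1 : ℂ)))⟫).re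
      = 1 / 8 ∧
    sSup {r : ℝ | ∃ a : (j : Fin 4) → EuclideanSpace ℂ (Fin 2),
        (∀ j, ‖a j‖ = 1) ∧ r = (⟪prodVec a, smolin (prodVec a)⟫).re} = 1 / 8 := by
  have hub : ∀ a : (j : Fin 4) → EuclideanSpace ℂ (Fin 2), (∀ j, ‖a j‖ = 1) →
      (⟪prodVec a, smolin (prodVec a)⟫).re ≤ 1 / 8 := by
    intro a ha
    rw [expect_eq a ha]
    have hk := keyIneq (fun j => 2 * (conj' (a j 0) * a j 1).re)
      (fun j => 2 * (conj' (a j 0) * a j 1).im)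
      (fun j => Complex.normSq (a j 0) - Complex.normSq (a j 1))
      (fun j => bloch_sq (a j) (ha j))
    linarith
  have he0 : ∀ j : Fin 4, ‖(fun _ : Fin 4 => EuclideanSpace.single (0 : Fin 2) (1 : ℂ)) j‖ = 1 := by
    intro j
    rw [EuclideanSpace.norm_single]; norm_num
  have hval : (⟪prodVec (fun _ : Fin 4 => EuclideanSpace.single (0 : Fin 2) (1 : ℂ)),
      smolin (prodVec (fun _ : Fin 4 => EuclideanSpace.single (0 : Fin 2) (1 : ℂ)))⟫).re
      = 1 / 8 := by
    rw [expect_eq _ he0]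
    simp [EuclideanSpace.single_apply]
    norm_num
  refine ⟨hub, hval, ?_⟩
  apply IsGreatest.csSup_eq
  constructor
  · exact ⟨fun _ => EuclideanSpace.single (0 : Fin 2) (1 : ℂ), he0, hval.symm⟩
  · rintro r ⟨a, ha, rfl⟩
    exact hub a ha
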